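/- arXiv:1309.1195 — 3 statements merged into one kernel-verified Lean document; each statement's English description precedes it below -/
import Mathlib

section
/- Let G be a group, Z(G) its center, and σ : G → G an anti-holomorphic involution modeled abstractly as a group automorphism with σ² = id (composition with conjugation of the coefficient field being immaterial at the group level). Let φ : Γ → G be a group homomorphism that is simple, meaning every g ∈ G with Ad_g ∘ φ = φ lies in Z(G). Suppose σ ∘ φ = Ad_g ∘ φ for some g ∈ G. Then σ(g) · g ∈ Z(G), and the map σ' = Ad_{g^{-1}} ∘ σ satisfies σ' ∘ φ = φ and (σ')² = Ad_{(σ(g)g)^{-1}}; in particular if additionally σ(g)g = e then σ' is an involution fixing φ pointwise. -/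
/-- If `φ : Γ → G` is a simple homomorphism and `σ ∘ φ = Ad_g ∘ φ` for an
involutive automorphism `σ` of `G`, then `σ(g)·g ∈ Z(G)`, and `σ' = Ad_{g⁻¹} ∘ σ` fixes `φ`
pointwise with `(σ')² = Ad_{(σ(g)g)⁻¹}`; in particular when `σ(g)g = e` the map `σ'` is an
involution fixing `φ`. -/
theorem stmt7 {G Γ : Type*} [Group G] [Group Γ]
    (σ : G →* G) (hσ2 : ∀ x : G, σ (σ x) = x)
    (φ : Γ →* G)
    (hsimple : ∀ g : G, (∀ γ : Γ, g * φ γ * g⁻¹ = φ γ) → g ∈ Subgroup.center G)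
    (g : G) (hfix : ∀ γ : Γ, σ (φ γ) = g * φ γ * g⁻¹) :
    σ g * g ∈ Subgroup.center G ∧
    (∀ γ : Γ, g⁻¹ * σ (φ γ) * g = φ γ) ∧
    (∀ x : G, g⁻¹ * σ (g⁻¹ * σ x * g) * g = (σ g * g)⁻¹ * x * (σ g * g)) ∧
    (σ g * g = 1 → ∀ x : G, g⁻¹ * σ (g⁻¹ * σ x * g) * g = x) := by
  have key : ∀ γ : Γ, (σ g * g) * φ γ * (σ g * g)⁻¹ = φ γ := by
    intro γ
    have h1 : σ (σ (φ γ)) = σ (g * φ γ * g⁻¹) := congrArg σ (hfix γ)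
    rw [hσ2] at h1
    simp only [map_mul, map_inv, hfix γ] at h1
    calc σ g * g * φ γ * (σ g * g)⁻¹
        = σ g * (g * φ γ * g⁻¹) * (σ g)⁻¹ := by group
      _ = φ γ := h1.symm
  have h3 : ∀ x : G, g⁻¹ * σ (g⁻¹ * σ x * g) * g = (σ g * g)⁻¹ * x * (σ g * g) := by
    intro x
    simp only [map_mul, map_inv, hσ2, mul_inv_rev]
    group
  refine ⟨hsimple _ key, fun γ => ?_, h3, fun h1 x => by rw [h3, h1]; group⟩
  rw [hfix γ]; group
end

section
/- Let G be a group, φ : Γ → G a simple homomorphism (every g with Ad_g ∘ φ = φ lies in Z(G)), and f* : Γ → Γ an automorphism-like map with f*² = Ad_μ for a fixed μ ∈ Γ and f*(μ) = μ. Suppose φ ∘ f* = Ad_u ∘ φ for some u ∈ G. Then c := u² · φ(μ)^{-1} lies in Z(G). Moreover, if u is replaced by uv for v ∈ Z(G), then c is replaced by c·v², so the class of c in Z(G)/{v² : v ∈ Z(G)} is independent of the choice of u. -/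
/-- For a simple homomorphism `φ : Γ → G`, an automorphism `f*` of `Γ` with
`f*² = Ad_μ`, `f*(μ) = μ`, and `φ ∘ f* = Ad_u ∘ φ`, the element `c = u²·φ(μ)⁻¹` is central,
and replacing `u` by `uv` with `v` central replaces `c` by `c·v²`. -/
theorem stmt8 {G Γ : Type*} [Group G] [Group Γ]
    (φ : Γ →* G)
    (hsimple : ∀ g : G, (∀ γ : Γ, g * φ γ * g⁻¹ = φ γ) → g ∈ Subgroup.center G)
    (fs : Γ →* Γ) (μ : Γ)
    (hfs2 : ∀ x : Γ, fs (fs x) = μ * x * μ⁻¹) (hfsμ : fs μ = μ)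
    (u : G) (hu : ∀ γ : Γ, φ (fs γ) = u * φ γ * u⁻¹) :
    u ^ 2 * (φ μ)⁻¹ ∈ Subgroup.center G ∧
    ∀ v ∈ Subgroup.center G, (u * v) ^ 2 * (φ μ)⁻¹ = u ^ 2 * (φ μ)⁻¹ * v ^ 2 := by
  have huμ : u * φ μ = φ μ * u := by
    have h := hu μ
    rw [hfsμ] at h
    conv_rhs => rw [h]
    group
  have key : ∀ γ : Γ, u ^ 2 * φ γ = φ μ * φ γ * (φ μ)⁻¹ * u ^ 2 := by
    intro γ
    have h1 : φ (fs (fs γ)) = u * (u * φ γ * u⁻¹) * u⁻¹ := by rw [hu, hu]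
    rw [hfs2] at h1
    simp only [map_mul, map_inv] at h1
    rw [pow_two, h1]; group
  constructor
  · apply hsimple
    intro γ
    have h2 := key (μ⁻¹ * γ)
    simp only [map_mul, map_inv] at h2
    have h3 : u ^ 2 * ((φ μ)⁻¹ * φ γ) = φ γ * (φ μ)⁻¹ * u ^ 2 := by
      rw [h2]; group
    have h4 : (φ μ)⁻¹ * u ^ 2 = u ^ 2 * (φ μ)⁻¹ := by
      have : u ^ 2 * φ μ = φ μ * u ^ 2 := by
        rw [pow_two, mul_assoc, huμ, ← mul_assoc, huμ, mul_assoc]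
      calc (φ μ)⁻¹ * u ^ 2 = (φ μ)⁻¹ * (u ^ 2 * φ μ) * (φ μ)⁻¹ := by group
        _ = (φ μ)⁻¹ * (φ μ * u ^ 2) * (φ μ)⁻¹ := by rw [this]
        _ = u ^ 2 * (φ μ)⁻¹ := by group
    calc u ^ 2 * (φ μ)⁻¹ * φ γ * (u ^ 2 * (φ μ)⁻¹)⁻¹
        = (u ^ 2 * ((φ μ)⁻¹ * φ γ)) * (u ^ 2 * (φ μ)⁻¹)⁻¹ := by group
      _ = (φ γ * (φ μ)⁻¹ * u ^ 2) * (u ^ 2 * (φ μ)⁻¹)⁻¹ := by rw [h3]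
      _ = φ γ * ((φ μ)⁻¹ * u ^ 2) * (u ^ 2 * (φ μ)⁻¹)⁻¹ := by group
      _ = φ γ * (u ^ 2 * (φ μ)⁻¹) * (u ^ 2 * (φ μ)⁻¹)⁻¹ := by rw [h4]
      _ = φ γ := by group
  · intro v hv
    rw [Subgroup.mem_center_iff] at hv
    have hv2 : ∀ g : G, g * v ^ 2 = v ^ 2 * g := fun g => by
      rw [pow_two, ← mul_assoc, hv g, mul_assoc, hv g, mul_assoc]
    have h5 : (u * v) ^ 2 = u ^ 2 * v ^ 2 := by
      rw [pow_two, pow_two, ← mul_assoc, mul_assoc u v u, ← hv u]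
      rw [pow_two v, ← mul_assoc, mul_assoc]
    rw [h5, mul_assoc, ← hv2 ((φ μ)⁻¹), ← mul_assoc]
end

section
/- Let G be a group with an automorphism σ satisfying σ² = id, let Γ be a group with automorphism f* satisfying f*² = Ad_μ and f*(μ) = μ, and let φ : Γ → G be a simple homomorphism (every g with Ad_g ∘ φ = φ lies in Z(G)). Suppose σ ∘ φ ∘ f* = Ad_{σ(u)} ∘ φ for some u ∈ G. Then c := u·σ(u)·φ(μ)^{-1} lies in Z(G) and satisfies σ(c) = c. Replacing u by uv for v ∈ Z(G) replaces c by c·v·σ(v), so the class of c in {c ∈ Z(G) : σ(c) = c}/{v·σ(v) : v ∈ Z(G)} is well defined. -/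
/-- For a simple homomorphism `φ : Γ → G`, an involutive automorphism `σ` of
`G`, an automorphism `f*` of `Γ` with `f*² = Ad_μ`, `f*(μ) = μ`, and
`σ ∘ φ ∘ f* = Ad_{σ(u)} ∘ φ`, the element `c = u·σ(u)·φ(μ)⁻¹` is central and `σ`-fixed,
and replacing `u` by `uv` with `v` central replaces `c` by `c·v·σ(v)`. -/
theorem stmt9 {G Γ : Type*} [Group G] [Group Γ]
    (σ : G →* G) (hσ2 : ∀ x : G, σ (σ x) = x)
    (fs : Γ →* Γ) (μ : Γ)
    (hfs2 : ∀ x : Γ, fs (fs x) = μ * x * μ⁻¹) (hfsμ : fs μ = μ)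
    (φ : Γ →* G)
    (hsimple : ∀ g : G, (∀ γ : Γ, g * φ γ * g⁻¹ = φ γ) → g ∈ Subgroup.center G)
    (u : G) (hu : ∀ γ : Γ, σ (φ (fs γ)) = σ u * φ γ * (σ u)⁻¹) :
    u * σ u * (φ μ)⁻¹ ∈ Subgroup.center G ∧
    σ (u * σ u * (φ μ)⁻¹) = u * σ u * (φ μ)⁻¹ ∧
    ∀ v ∈ Subgroup.center G,
      (u * v) * σ (u * v) * (φ μ)⁻¹ = u * σ u * (φ μ)⁻¹ * (v * σ v) := by
  -- Apply σ to hu : φ (fs γ) = u * σ (φ γ) * u⁻¹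
  have hφ2 : ∀ γ : Γ, φ (fs γ) = u * σ (φ γ) * u⁻¹ := by
    intro γ
    have := congrArg σ (hu γ)
    simpa [map_mul, map_inv, hσ2] using this
  set a := σ (φ μ) with ha
  set b := σ u * u with hb
  -- conjugation by a equals conjugation by b on the image of σ ∘ φ
  have hconj : ∀ γ : Γ, a * σ (φ γ) * a⁻¹ = b * σ (φ γ) * b⁻¹ := by
    intro γ
    have h1 := hu (fs γ)
    rw [hfs2, hφ2 γ] at h1
    simp only [map_mul, map_inv] at h1
    -- h1 : σ (φ μ) * σ (φ γ) * σ (φ μ)⁻¹ = σ u * (u * σ (φ γ) * u⁻¹) * (σ u)⁻¹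
    rw [ha, hb]
    simp only [mul_inv_rev]
    calc a * σ (φ γ) * a⁻¹ = σ u * (u * σ (φ γ) * u⁻¹) * (σ u)⁻¹ := by
          rw [ha]; simpa [mul_assoc] using h1
      _ = σ u * u * σ (φ γ) * (u⁻¹ * (σ u)⁻¹) := by group
  set d := a⁻¹ * b with hd
  have hcomm : ∀ γ : Γ, d * σ (φ γ) * d⁻¹ = σ (φ γ) := by
    intro γ
    have h1 := hconj γ
    rw [hd]
    calc a⁻¹ * b * σ (φ γ) * (a⁻¹ * b)⁻¹
        = a⁻¹ * (b * σ (φ γ) * b⁻¹) * a := by group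
      _ = a⁻¹ * (a * σ (φ γ) * a⁻¹) * a := by rw [h1]
      _ = σ (φ γ) := by group
  -- transfer along σ: σ d commutes with φ γ
  have hσdcomm : ∀ γ : Γ, σ d * φ γ * (σ d)⁻¹ = φ γ := by
    intro γ
    have := congrArg σ (hcomm γ)
    simpa [map_mul, map_inv, hσ2] using this
  have hσd : σ d ∈ Subgroup.center G := hsimple _ hσdcomm
  -- σ d = (φ μ)⁻¹ * (u * σ u)
  have hσdval : σ d = (φ μ)⁻¹ * (u * σ u) := by
    rw [hd, ha, hb]
    simp [map_mul, map_inv, hσ2, mul_assoc]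
  -- centrality of c
  have hcent : u * σ u * (φ μ)⁻¹ ∈ Subgroup.center G := by
    have hx : u * σ u * (φ μ)⁻¹ = φ μ * σ d * (φ μ)⁻¹ := by
      rw [hσdval]; group
    rw [hx]
    rw [Subgroup.mem_center_iff] at hσd ⊢
    intro g
    have h1 := hσd ((φ μ)⁻¹ * g * φ μ)
    calc g * (φ μ * σ d * (φ μ)⁻¹)
        = φ μ * (((φ μ)⁻¹ * g * φ μ) * σ d) * (φ μ)⁻¹ := by group
      _ = φ μ * (σ d * ((φ μ)⁻¹ * g * φ μ)) * (φ μ)⁻¹ := by rw [h1]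
      _ = φ μ * σ d * (φ μ)⁻¹ * g := by group
  refine ⟨hcent, ?_, ?_⟩
  · -- σ-fixed: σ c = σu * c * σu⁻¹ = c by centrality
    have hμfix := hu μ
    rw [hfsμ] at hμfix
    -- hμfix : σ (φ μ) = σ u * φ μ * (σ u)⁻¹
    have hσc : σ (u * σ u * (φ μ)⁻¹) = σ u * (u * σ u * (φ μ)⁻¹) * (σ u)⁻¹ := by
      rw [map_mul, map_mul, map_inv, hσ2, hμfix]
      group
    rw [hσc]
    rw [Subgroup.mem_center_iff] at hcent
    rw [hcent (σ u)]
    group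
  · intro v hv
    rw [Subgroup.mem_center_iff] at hv
    have hσv : ∀ g : G, σ v * g = g * σ v := by
      intro g
      have := congrArg σ (hv (σ g))
      simpa [map_mul, hσ2] using this.symm
    rw [map_mul]
    calc u * v * (σ u * σ v) * (φ μ)⁻¹
        = u * (v * σ u) * σ v * (φ μ)⁻¹ := by group
      _ = u * (σ u * v) * σ v * (φ μ)⁻¹ := by rw [hv (σ u)]
      _ = u * σ u * v * (σ v * (φ μ)⁻¹) := by group
      _ = u * σ u * v * ((φ μ)⁻¹ * σ v) := by rw [hσv ((φ μ)⁻¹)]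
      _ = u * σ u * (v * (φ μ)⁻¹) * σ v := by group
      _ = u * σ u * ((φ μ)⁻¹ * v) * σ v := by rw [hv ((φ μ)⁻¹)]
      _ = u * σ u * (φ μ)⁻¹ * (v * σ v) := by group
end
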